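/- Let F ∈ C¹(0, ∞) satisfy F(z) ∼ a·z as z → ∞ for some constant a < 0 (i.e., F(z)/(a·z) → 1), and assume inf F' > −∞. Then there exists a nonnegative integer k₀ such that for every integer k ≥ k₀, the equation cot z = F(z) has exactly one solution in the open interval (kπ, (k+1)π). -/

import Mathlib

open Real Filter Set

lemma aux_sin_pos {k : ℕ} {z : ℝ} (hz : z ∈ Set.Ioo ((k:ℝ)*π) (((k:ℝ)+1)*π)) :
    0 < (-1:ℝ)^k * Real.sin z := by
  have h := Real.sin_sub_nat_mul_pi z k
  have h2 : 0 < Real.sin (z - k*π) :=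
    Real.sin_pos_of_pos_of_lt_pi (by linarith [hz.1]) (by nlinarith [hz.2])
  rw [h] at h2; exact h2

lemma aux_sin_ne {k : ℕ} {z : ℝ} (hz : z ∈ Set.Ioo ((k:ℝ)*π) (((k:ℝ)+1)*π)) :
    Real.sin z ≠ 0 := by
  intro h0
  have := aux_sin_pos hz
  rw [h0, mul_zero] at this
  exact lt_irrefl _ this

lemma hasDerivAt_cotAux {z : ℝ} (hs : Real.sin z ≠ 0) :
    HasDerivAt (fun z => Real.cos z / Real.sin z) (-(1 / Real.sin z ^ 2)) z := by
  have h := (Real.hasDerivAt_cos z).div (Real.hasDerivAt_sin z) hs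
  refine h.congr_deriv ?_
  have h2 := Real.sin_sq_add_cos_sq z
  rw [← h2]
  ring

lemma inv_sin_sq {z : ℝ} (hs : Real.sin z ≠ 0) :
    1 / Real.sin z ^ 2 = 1 + (Real.cos z / Real.sin z)^2 := by
  have h2 := Real.sin_sq_add_cos_sq z
  field_simp
  linarith

lemma strictAntiOn_cotAux (k : ℕ) :
    StrictAntiOn (fun z => Real.cos z / Real.sin z)
      (Set.Ioo ((k:ℝ)*π) (((k:ℝ)+1)*π)) := by
  apply strictAntiOn_of_deriv_neg (convex_Ioo _ _)
  · intro z hz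
    exact (hasDerivAt_cotAux (aux_sin_ne hz)).continuousAt.continuousWithinAt
  · intro z hz
    rw [interior_Ioo] at hz
    have hs := aux_sin_ne hz
    rw [(hasDerivAt_cotAux hs).deriv]
    have : 0 < Real.sin z ^ 2 := by positivity
    have : 0 < 1 / Real.sin z ^ 2 := by positivity
    linarith

lemma cos_succ_pi (k : ℕ) : Real.cos (((k:ℝ)+1)*π) = (-1:ℝ)^(k+1) := by
  have := Real.cos_add_int_mul_pi 0 ((k:ℤ)+1)
  push_cast at this
  simp only [zero_add] at this; rw [this, Real.cos_zero, mul_one, ← zpow_natCast, Nat.cast_add, Nat.cast_one]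

lemma tendsto_cotAux (k : ℕ) :
    Tendsto (fun z => Real.cos z / Real.sin z)
      (nhdsWithin (((k:ℝ)+1)*π) (Set.Iio (((k:ℝ)+1)*π))) atBot := by
  set s : ℝ := (-1:ℝ)^k with hsdef
  have hsne : s ≠ 0 := by positivity
  have hkey : ∀ z, (s * Real.sin z)⁻¹ * (s * Real.cos z) = Real.cos z / Real.sin z := by
    intro z
    rw [mul_inv_rev, div_eq_mul_inv]
    field_simp
  have hlt : (k:ℝ)*π < ((k:ℝ)+1)*π := by nlinarith [Real.pi_pos]
  have T1 : Tendsto (fun z => s * Real.sin z)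
      (nhdsWithin (((k:ℝ)+1)*π) (Set.Iio (((k:ℝ)+1)*π))) (nhdsWithin 0 (Set.Ioi 0)) := by
    rw [tendsto_nhdsWithin_iff]
    constructor
    · have hc : Continuous fun z => s * Real.sin z := continuous_const.mul Real.continuous_sin
      have : Tendsto (fun z => s * Real.sin z)
          (nhdsWithin (((k:ℝ)+1)*π) (Set.Iio (((k:ℝ)+1)*π)))
          (nhds (s * Real.sin (((k:ℝ)+1)*π))) :=
        (hc.tendsto (((k:ℝ)+1)*π)).mono_left nhdsWithin_le_nhds
      have hval : s * Real.sin (((k:ℝ)+1)*π) = 0 := by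
        have : Real.sin (((k:ℝ)+1)*π) = 0 := by
          have := Real.sin_nat_mul_pi (k+1)
          push_cast at this
          linarith [this, Real.sin_nat_mul_pi (k+1)]
        rw [this, mul_zero]
      rwa [hval] at this
    · filter_upwards [Ioo_mem_nhdsLT_of_mem (Set.mem_Ioc.2 ⟨hlt, le_refl _⟩)] with z hz
      exact aux_sin_pos hz
  have T2 : Tendsto (fun z => (s * Real.sin z)⁻¹)
      (nhdsWithin (((k:ℝ)+1)*π) (Set.Iio (((k:ℝ)+1)*π))) atTop :=
    tendsto_inv_nhdsGT_zero.comp T1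
  have T3 : Tendsto (fun z => s * Real.cos z)
      (nhdsWithin (((k:ℝ)+1)*π) (Set.Iio (((k:ℝ)+1)*π))) (nhds (-1)) := by
    have hc : Continuous fun z => s * Real.cos z := continuous_const.mul Real.continuous_cos
    have : Tendsto (fun z => s * Real.cos z)
        (nhdsWithin (((k:ℝ)+1)*π) (Set.Iio (((k:ℝ)+1)*π)))
        (nhds (s * Real.cos (((k:ℝ)+1)*π))) :=
      (hc.tendsto (((k:ℝ)+1)*π)).mono_left nhdsWithin_le_nhds
    have hval : s * Real.cos (((k:ℝ)+1)*π) = -1 := by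
      rw [cos_succ_pi, hsdef, ← pow_add]
      simp [pow_succ, ← two_mul, pow_mul]
    rwa [hval] at this
  have := T2.atTop_mul_neg (by norm_num : (-1:ℝ) < 0) T3
  exact this.congr hkey

set_option maxHeartbeats 1000000 in
/-- If F ∈ C¹(0,∞), F(z) ∼ a·z as z → ∞ with a < 0, and inf F' > −∞,
then there is k₀ such that for every k ≥ k₀ the equation cot z = F(z) has a
unique solution in (kπ, (k+1)π). -/
theorem cot_eq_unique_solution (F : ℝ → ℝ) (a : ℝ) (ha : a < 0)
    (hC1 : ContDiffOn ℝ 1 F (Set.Ioi 0))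
    (hasymp : Tendsto (fun z => F z / (a * z)) atTop (nhds 1))
    (hinf : ∃ m : ℝ, ∀ z > 0, m ≤ deriv F z) :
    ∃ k₀ : ℕ, ∀ k : ℕ, k₀ ≤ k →
      ∃! z : ℝ, z ∈ Set.Ioo ((k : ℝ) * π) (((k : ℝ) + 1) * π) ∧ Real.cot z = F z := by
  simp only [Real.cot_eq_cos_div_sin]
  set c : ℝ → ℝ := fun z => Real.cos z / Real.sin z with hcdef
  obtain ⟨m, hm⟩ := hinf
  obtain ⟨C, hC1', hCsq⟩ : ∃ C : ℝ, 1 ≤ C ∧ -m ≤ C^2 := by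
    refine ⟨1 + max 0 (-m), by linarith [le_max_left 0 (-m)], ?_⟩
    have h1 := le_max_right 0 (-m)
    have h2 := le_max_left 0 (-m)
    nlinarith
  have hCpos : 0 < C := by linarith
  -- asymptotic bounds
  have hlo := hasymp.eventually (eventually_gt_nhds (by norm_num : (1:ℝ)/2 < 1))
  have hhi := hasymp.eventually (eventually_lt_nhds (by norm_num : (1:ℝ) < 3/2))
  obtain ⟨T, hT⟩ := (hlo.and hhi).exists_forall_of_atTop
  -- bounds on F for large z
  have hFbound : ∀ z : ℝ, 0 < z → T ≤ z → F z < a*z/2 ∧ 3/2*(a*z) < F z := by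
    intro z hz0 hzT
    obtain ⟨h1, h2⟩ := hT z hzT
    have haz : a * z < 0 := mul_neg_of_neg_of_pos ha hz0
    have hazne : a * z ≠ 0 := ne_of_lt haz
    have e1 := mul_lt_mul_of_neg_right h1 haz
    have e2 := mul_lt_mul_of_neg_right h2 haz
    rw [div_mul_cancel₀ _ hazne] at e1 e2
    constructor <;> linarith
  -- choose k₀
  have hpi := Real.pi_pos
  obtain ⟨k₀, hk₀⟩ := exists_nat_ge (max (max T 1) (2*C/(-a)) / π)
  have hk₀M : max (max T 1) (2*C/(-a)) ≤ (k₀:ℝ) * π := by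
    rw [div_le_iff₀ hpi] at hk₀; linarith
  refine ⟨k₀, fun k hk => ?_⟩
  have hkk : (k₀:ℝ) * π ≤ (k:ℝ) * π := by
    have : (k₀:ℝ) ≤ (k:ℝ) := by exact_mod_cast hk
    nlinarith
  set b : ℝ := ((k:ℝ)+1)*π with hbdef
  have hlt : (k:ℝ)*π < b := by simp only [hbdef]; nlinarith
  -- facts on the interval
  have hIoi : Set.Ioo ((k:ℝ)*π) b ⊆ Set.Ioi 0 := by
    intro z hz
    have h1 : (1:ℝ) ≤ (k₀:ℝ)*π := le_trans (le_trans (le_max_right T 1) (le_max_left _ _)) hk₀M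
    simp only [Set.mem_Ioi]; linarith [hz.1]
  have hFlt : ∀ z ∈ Set.Ioo ((k:ℝ)*π) b, F z ≤ -C := by
    intro z hz
    have hz0 : 0 < z := hIoi hz
    have hzT : T ≤ z := by
      have := le_trans (le_trans (le_max_left T 1) (le_max_left _ _)) hk₀M
      linarith [hz.1, hkk]
    have h := (hFbound z hz0 hzT).1
    have hzC : 2*C/(-a) ≤ z := by
      have := le_trans (le_max_right _ _) hk₀M
      linarith [hz.1, hkk]
    have hna : 0 < -a := by linarith
    rw [div_le_iff₀ hna] at hzC
    nlinarith
  have hFgt : ∀ z ∈ Set.Ioo ((k:ℝ)*π) b, 3/2*(a*b) < F z := by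
    intro z hz
    have hz0 : 0 < z := hIoi hz
    have hzT : T ≤ z := by
      have := le_trans (le_trans (le_max_left T 1) (le_max_left _ _)) hk₀M
      linarith [hz.1, hkk]
    have h := (hFbound z hz0 hzT).2
    have : a * b ≤ a * z := by nlinarith [hz.2]
    nlinarith
  -- differentiability of F
  have hFdiff : ∀ z : ℝ, 0 < z → DifferentiableAt ℝ F z := by
    intro z hz
    exact (hC1.differentiableOn one_ne_zero).differentiableAt (isOpen_Ioi.mem_nhds hz)
  -- existence
  set za : ℝ := (k:ℝ)*π + π/2 with hzadef
  have hza : za ∈ Set.Ioo ((k:ℝ)*π) b := by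
    constructor <;> [skip; skip] <;> simp only [hzadef, hbdef] <;> linarith
  have hcza : c za = 0 := by
    have : Real.cos za = 0 := by
      rw [hzadef, Real.cos_add]
      simp [Real.sin_nat_mul_pi]
    simp only [hcdef, this, zero_div]
  -- find zb with c zb < F zb
  have hzb : ∃ zb ∈ Set.Ioo ((k:ℝ)*π) b, c zb < 3/2*(a*b) := by
    have h1 := (tendsto_cotAux k).eventually (eventually_lt_atBot (3/2*(a*b)))
    have h2 : Set.Ioo ((k:ℝ)*π) b ∈ nhdsWithin b (Set.Iio b) :=
      Ioo_mem_nhdsLT_of_mem (Set.mem_Ioc.2 ⟨hlt, le_refl _⟩)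
    obtain ⟨zb, hzb1, hzb2⟩ := (h1.and h2).exists
    exact ⟨zb, hzb2, hzb1⟩
  obtain ⟨zb, hzbI, hzbc⟩ := hzb
  have hczb : c zb < F zb := lt_of_lt_of_le hzbc (le_of_lt (hFgt zb hzbI))
  have hzazb : za < zb := by
    by_contra hle
    push_neg at hle
    have h2 : c za ≤ c zb := (strictAntiOn_cotAux k).antitoneOn hzbI hza hle
    rw [hcza] at h2
    linarith [hczb, hFlt zb hzbI]
  -- IVT
  have hccont : ∀ z ∈ Set.Ioo ((k:ℝ)*π) b, ContinuousAt c z := fun z hz =>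
    (hasDerivAt_cotAux (aux_sin_ne hz)).continuousAt
  have hIcc : Set.Icc za zb ⊆ Set.Ioo ((k:ℝ)*π) b := fun z hz =>
    ⟨lt_of_lt_of_le hza.1 hz.1, lt_of_le_of_lt hz.2 hzbI.2⟩
  have hgcont : ContinuousOn (fun z => c z - F z) (Set.Icc za zb) := by
    intro z hz
    have hzI := hIcc hz
    exact ((hccont z hzI).sub (hFdiff z (hIoi hzI)).continuousAt).continuousWithinAt
  have hga : 0 < c za - F za := by
    have := hFlt za hza; rw [hcza]; linarith
  have hgb : c zb - F zb < 0 := by linarith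
  have := intermediate_value_Ioo' (le_of_lt hzazb) hgcont
    (Set.mem_Ioo.2 ⟨hgb, hga⟩)
  obtain ⟨z, hzmem, hzval⟩ := this
  have hzI : z ∈ Set.Ioo ((k:ℝ)*π) b := hIcc ⟨le_of_lt hzmem.1, le_of_lt hzmem.2⟩
  have hzeq : c z = F z := by
    have : c z - F z = 0 := hzval
    linarith [this]
  -- uniqueness claim
  have huniq : ∀ y₁ y₂ : ℝ, y₁ ∈ Set.Ioo ((k:ℝ)*π) b → y₂ ∈ Set.Ioo ((k:ℝ)*π) b →
      c y₁ = F y₁ → c y₂ = F y₂ → y₁ < y₂ → False := by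
    intro y₁ y₂ hy₁ hy₂ he₁ he₂ hlt12
    have hIcc2 : Set.Icc y₁ y₂ ⊆ Set.Ioo ((k:ℝ)*π) b := fun z hz =>
      ⟨lt_of_lt_of_le hy₁.1 hz.1, lt_of_le_of_lt hz.2 hy₂.2⟩
    have hanti : StrictAntiOn (fun z => c z - F z) (Set.Icc y₁ y₂) := by
      apply strictAntiOn_of_deriv_neg (convex_Icc _ _)
      · intro z hz
        have hzI := hIcc2 hz
        exact ((hccont z hzI).sub (hFdiff z (hIoi hzI)).continuousAt).continuousWithinAt
      · intro z hz
        rw [interior_Icc] at hz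
        have hzI : z ∈ Set.Ioo ((k:ℝ)*π) b := hIcc2 ⟨le_of_lt hz.1, le_of_lt hz.2⟩
        have hs := aux_sin_ne hzI
        have hder : HasDerivAt (fun z => c z - F z) (-(1/Real.sin z^2) - deriv F z) z :=
          (hasDerivAt_cotAux hs).sub (hFdiff z (hIoi hzI)).hasDerivAt
        rw [hder.deriv]
        have hinv := inv_sin_sq hs
        have hcz : c z < c y₁ := (strictAntiOn_cotAux k) hy₁ hzI hz.1
        have hcy1 : c y₁ ≤ -C := by rw [he₁]; exact hFlt y₁ hy₁
        have hczC : c z < -C := lt_of_lt_of_le hcz hcy1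
        have hsq : C^2 < (c z)^2 := by nlinarith
        have hmz := hm z (hIoi hzI)
        simp only [hcdef] at hinv hsq
        rw [hinv]
        linarith
    have h0 : c y₂ - F y₂ < c y₁ - F y₁ := hanti (Set.left_mem_Icc.2 (le_of_lt hlt12))
      (Set.right_mem_Icc.2 (le_of_lt hlt12)) hlt12
    rw [he₁, he₂] at h0
    linarith
  refine ⟨z, ⟨hzI, hzeq⟩, ?_⟩
  rintro y ⟨hyI, hyeq⟩
  rcases lt_trichotomy y z with h | h | h
  · exact absurd (huniq y z hyI hzI hyeq hzeq h) (fun x => x)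
  · exact h
  · exact absurd (huniq z y hzI hyI hzeq hyeq h) (fun x => x)
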